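/- Let np be the map from games over L5 to normal-play combinatorial games (pregames) that replaces every atom by the normal-play game 0 = { | } while keeping the tree of left and right options. Then the sequence np(G_0), np(G_1), np(G_2), … of normal-play games is strictly increasing: for every natural number n, np(G_n) < np(G_{n+1}) in normal-play combinatorial game theory. -/

import Mathlib

universe u

/-- Combinatorial games over a poset `A` of atoms: either an atomic game `[a]` for an atom
`a : A`, or a composite game `⟨L|R⟩` where `L` and `R` are nonempty families of games
(the left and right options). -/
inductive PoGame (A : Type u) : Type (u + 1) where
  | atom : A → PoGame A
  | mk : (xl xr : Type u) → (xl → PoGame A) → (xr → PoGame A) →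
      Nonempty xl → Nonempty xr → PoGame A

/-- Conway pregames, as in the older Mathlib's `SetTheory.PGame` (removed from Mathlib). -/
inductive SetTheory.PGame : Type (u + 1) where
  | mk : (α β : Type u) → (α → SetTheory.PGame) → (β → SetTheory.PGame) → SetTheory.PGame

namespace SetTheory.PGame

mutual
  /-- `PLe x y` is `x ≤ y`: no left option `x^L` has `y ≤ x^L`, no right option `y^R`
  has `y^R ≤ x` (expressed via `PLf`, the relation `⧏`). -/
  inductive PLe : PGame.{u} → PGame.{u} → Prop
    | intro (xl xr : Type u) (xL : xl → PGame.{u}) (xR : xr → PGame.{u})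
        (yl yr : Type u) (yL : yl → PGame.{u}) (yR : yr → PGame.{u})
        (hL : ∀ i, PLf (xL i) (mk yl yr yL yR))
        (hR : ∀ j, PLf (mk xl xr xL xR) (yR j)) : PLe (mk xl xr xL xR) (mk yl yr yL yR)

  /-- `PLf x y` is `x ⧏ y`: some right option `x^R ≤ y` or `x ≤` some left option `y^L`. -/
  inductive PLf : PGame.{u} → PGame.{u} → Prop
    | right (xl xr : Type u) (xL : xl → PGame.{u}) (xR : xr → PGame.{u}) (y : PGame.{u})
        (j : xr) (h : PLe (xR j) y) : PLf (mk xl xr xL xR) y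
    | left (x : PGame.{u}) (yl yr : Type u) (yL : yl → PGame.{u}) (yR : yr → PGame.{u})
        (i : yl) (h : PLe x (yL i)) : PLf x (mk yl yr yL yR)
end

instance : Zero PGame.{u} := ⟨mk PEmpty PEmpty PEmpty.elim PEmpty.elim⟩

instance : LE PGame.{u} := ⟨PLe⟩

instance : LT PGame.{u} := ⟨fun x y => x ≤ y ∧ ¬ y ≤ x⟩

end SetTheory.PGame

namespace PoGame

variable {A : Type u}

/-- `G` is an atomic game. -/
def IsAtomic : PoGame A → Prop
  | atom _ => True
  | mk _ _ _ _ _ _ => False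

/-- `G` is a left option of the game given as second argument. -/
def IsLeftOption (G : PoGame A) : PoGame A → Prop
  | atom _ => False
  | mk _ _ L _ _ _ => ∃ i, L i = G

/-- `G` is a right option of the game given as second argument. -/
def IsRightOption (G : PoGame A) : PoGame A → Prop
  | atom _ => False
  | mk _ _ _ R _ _ => ∃ j, R j = G

section Order

variable [PartialOrder A]

mutual
  /-- `Le G H` is the relation `G ≤ H` on games over the poset `A`, defined by mutual
  recursion with `Lf` (the relation `G ⊲ H`): `G ≤ H` iff every left option `G^L`
  satisfies `G^L ⊲ H`, every right option `H^R` satisfies `G ⊲ H^R`, and if `G` or `H`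
  is atomic then `G ⊲ H`. -/
  inductive Le : PoGame A → PoGame A → Prop
    | intro (G H : PoGame A)
        (hL : ∀ G', IsLeftOption G' G → Lf G' H)
        (hR : ∀ H', IsRightOption H' H → Lf G H')
        (hA : IsAtomic G ∨ IsAtomic H → Lf G H) : Le G H

  /-- `Lf G H` is the relation `G ⊲ H` on games over the poset `A`: it holds iff some
  right option `G^R` satisfies `G^R ≤ H`, or some left option `H^L` satisfies `G ≤ H^L`,
  or `G = [a]` and `H = [b]` are atomic with `a ≤ b` in `A`. -/
  inductive Lf : PoGame A → PoGame A → Prop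
    | rightOption (G H G' : PoGame A) (h : IsRightOption G' G) (hle : Le G' H) : Lf G H
    | leftOption (G H H' : PoGame A) (h : IsLeftOption H' H) (hle : Le G H') : Lf G H
    | atom (a b : A) (hab : a ≤ b) : Lf (atom a) (atom b)
end

/-- Two games are equivalent if `G ≤ H` and `H ≤ G`. -/
def GEquiv (G H : PoGame A) : Prop := Le G H ∧ Le H G

/-- `G` is locally monotone if `G ≤ G^L` for every left option `G^L` and `G^R ≤ G` for
every right option `G^R`. -/
def LocallyMonotone (G : PoGame A) : Prop :=
  (∀ G', IsLeftOption G' G → Le G G') ∧ (∀ G', IsRightOption G' G → Le G' G)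

/-- `G` is an option (left or right) of `H`. -/
def IsOption (G H : PoGame A) : Prop := IsLeftOption G H ∨ IsRightOption G H

/-- `G` is a position of `H`: `H` itself, an option of `H`, an option of an option, etc. -/
def IsPosition (G H : PoGame A) : Prop := Relation.ReflTransGen IsOption G H

/-- `G` is monotone if every position of `G` is locally monotone. -/
def Monotone (G : PoGame A) : Prop := ∀ K, IsPosition K G → LocallyMonotone K

end Order

/-- The 5-element linearly ordered set `L5 = {-3, -2, -1, 0, 1}`. -/
abbrev L5 : Type := {a : ℤ // -3 ≤ a ∧ a ≤ 1}

/-- `G` has mean `C`: an atomic game `[a]` has mean `a`, and a composite game has mean `C`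
iff every left option has mean `C + 1` and every right option has mean `C - 1`. -/
def HasMean : PoGame L5 → ℤ → Prop
  | atom a, C => (a : ℤ) = C
  | mk _ _ L R _ _, C => (∀ i, HasMean (L i) (C + 1)) ∧ (∀ j, HasMean (R j) (C - 1))

/-- The game `⟨G | H⟩` with a single left option `G` and a single right option `H`. -/
def ofPair (G H : PoGame A) : PoGame A :=
  mk PUnit PUnit (fun _ => G) (fun _ => H) ⟨PUnit.unit⟩ ⟨PUnit.unit⟩

/-- `⋆ = ⟨-1 | -3⟩`. -/
def star : PoGame L5 := ofPair (atom ⟨-1, by norm_num⟩) (atom ⟨-3, by norm_num⟩)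

/-- `M(G) = ⟨1 | G⟩`. -/
def M (G : PoGame L5) : PoGame L5 := ofPair (atom ⟨1, by norm_num⟩) G

/-- `P(G) = ⟨G | -2⟩`. -/
def P (G : PoGame L5) : PoGame L5 := ofPair G (atom ⟨-2, by norm_num⟩)

/-- `P⋆(G) = ⟨G | ⋆⟩`. -/
def Pstar (G : PoGame L5) : PoGame L5 := ofPair G star

/-- `Pn n G = P G` if `n` is odd, `P⋆ G` if `n` is even. -/
def Pn (n : ℕ) (G : PoGame L5) : PoGame L5 := if Odd n then P G else Pstar G

/-- The sequence `G_0 = [0]`, `G_{n+1} = M (Pn n (G_n))`. -/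
def Gseq : ℕ → PoGame L5
  | 0 => atom ⟨0, by norm_num⟩
  | n + 1 => M (Pn n (Gseq n))

/-- The normal-play game obtained from a game over `L5` by replacing every atom by the
normal-play game `0 = { | }`, keeping the tree of left and right options. -/
def np : PoGame L5 → SetTheory.PGame.{0}
  | atom _ => 0
  | mk xl xr L R _ _ => SetTheory.PGame.mk xl xr (fun i => np (L i)) (fun j => np (R j))

end PoGame

namespace SetTheory.PGame

def LeftMoves : PGame.{u} → Type u
  | mk l _ _ _ => l

def RightMoves : PGame.{u} → Type u
  | mk _ r _ _ => r

def moveLeft : (x : PGame.{u}) → LeftMoves x → PGame.{u}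
  | mk _ _ L _ => L

def moveRight : (x : PGame.{u}) → RightMoves x → PGame.{u}
  | mk _ _ _ R => R

@[simp] theorem moveLeft_mk {xl xr : Type u} {xL : xl → PGame.{u}} {xR : xr → PGame.{u}} :
    (mk xl xr xL xR).moveLeft = xL := rfl

@[simp] theorem moveRight_mk {xl xr : Type u} {xL : xl → PGame.{u}} {xR : xr → PGame.{u}} :
    (mk xl xr xL xR).moveRight = xR := rfl

infix:50 " ⧏ " => PLf

theorem le_mk_iff {xl xr yl yr : Type u} {xL : xl → PGame.{u}} {xR : xr → PGame.{u}}
    {yL : yl → PGame.{u}} {yR : yr → PGame.{u}} :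
    PLe (mk xl xr xL xR) (mk yl yr yL yR) ↔
      (∀ i, PLf (xL i) (mk yl yr yL yR)) ∧ ∀ j, PLf (mk xl xr xL xR) (yR j) := by
  constructor
  · intro h
    cases h with
    | intro _ _ _ _ _ _ _ _ hL hR => exact ⟨hL, hR⟩
  · intro h
    exact PLe.intro _ _ _ _ _ _ _ _ h.1 h.2

theorem le_iff_forall_lf {x y : PGame.{u}} :
    x ≤ y ↔ (∀ i, x.moveLeft i ⧏ y) ∧ ∀ j, x ⧏ y.moveRight j := by
  cases x; cases y; exact le_mk_iff

theorem lf_iff {x y : PGame.{u}} :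
    PLf x y ↔ (∃ j, PLe (x.moveRight j) y) ∨ (∃ i, PLe x (y.moveLeft i)) := by
  constructor
  · intro h
    cases h with
    | right a b c d e j h => exact Or.inl ⟨j, h⟩
    | left a b c d e i h => exact Or.inr ⟨i, h⟩
  · rintro (⟨j, h⟩ | ⟨i, h⟩)
    · cases x; exact PLf.right _ _ _ _ _ j h
    · cases y; exact PLf.left _ _ _ _ _ i h

theorem lf_iff_not_le_aux (x y : PGame.{u}) :
    (PLf x y ↔ ¬ PLe y x) ∧ (PLf y x ↔ ¬ PLe x y) := by
  induction x generalizing y with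
  | mk xl xr xL xR ihxl ihxr =>
  induction y with
  | mk yl yr yL yR ihyl ihyr =>
  have h1 : ∀ i, PLf (yL i) (mk xl xr xL xR) ↔ ¬ PLe (mk xl xr xL xR) (yL i) :=
    fun i => (ihyl i).2
  have h2 : ∀ j, PLf (mk yl yr yL yR) (xR j) ↔ ¬ PLe (xR j) (mk yl yr yL yR) :=
    fun j => (ihxr j _).2
  have h3 : ∀ i, PLf (xL i) (mk yl yr yL yR) ↔ ¬ PLe (mk yl yr yL yR) (xL i) :=
    fun i => (ihxl i _).1
  have h4 : ∀ j, PLf (mk xl xr xL xR) (yR j) ↔ ¬ PLe (yR j) (mk xl xr xL xR) :=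
    fun j => (ihyr j).1
  rw [lf_iff (x := mk xl xr xL xR) (y := mk yl yr yL yR),
    lf_iff (x := mk yl yr yL yR) (y := mk xl xr xL xR), le_mk_iff, le_mk_iff]
  simp only [moveRight_mk, moveLeft_mk, not_and_or, not_forall, h1, h2, h3, h4, not_not]
  exact ⟨or_comm, or_comm⟩

theorem lf_iff_not_le {x y : PGame.{u}} : PLf x y ↔ ¬ PLe y x := (lf_iff_not_le_aux x y).1

theorem le_iff' {x y : PGame.{u}} :
    PLe x y ↔ (∀ i, ¬ PLe y (x.moveLeft i)) ∧ ∀ j, ¬ PLe (y.moveRight j) x := by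
  simp only [← lf_iff_not_le]
  exact le_iff_forall_lf

theorem le_trans_aux (x y z : PGame.{u}) :
    (PLe x y → PLe y z → PLe x z) ∧ (PLe y z → PLe z x → PLe y x) ∧
      (PLe z x → PLe x y → PLe z y) := by
  induction x generalizing y z with
  | mk xl xr xL xR ihxl ihxr =>
  induction y generalizing z with
  | mk yl yr yL yR ihyl ihyr =>
  induction z with
  | mk zl zr zL zR ihzl ihzr =>
  refine ⟨fun h1 h2 => ?_, fun h1 h2 => ?_, fun h1 h2 => ?_⟩
  · rw [le_iff'] at h1 h2 ⊢
    exact ⟨fun i h => h1.1 i ((ihxl i _ _).2.1 (le_iff'.2 h2) h),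
      fun j h => h2.2 j ((ihzr j).2.2 h (le_iff'.2 h1))⟩
  · rw [le_iff'] at h1 h2 ⊢
    exact ⟨fun i h => h1.1 i ((ihyl i _).2.2 (le_iff'.2 h2) h),
      fun j h => h2.2 j ((ihxr j _ _).1 h (le_iff'.2 h1))⟩
  · rw [le_iff'] at h1 h2 ⊢
    exact ⟨fun i h => h1.1 i ((ihzl i).1 (le_iff'.2 h2) h),
      fun j h => h2.2 j ((ihyr j _).2.1 h (le_iff'.2 h1))⟩

theorem le_refl' (x : PGame.{u}) : PLe x x := by
  induction x with
  | mk xl xr xL xR ihl ihr =>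
  exact PLe.intro _ _ _ _ _ _ _ _ (fun i => PLf.left _ _ _ _ _ i (ihl i))
    (fun j => PLf.right _ _ _ _ _ j (ihr j))

theorem lf_mk_of_le {x : PGame.{u}} {yl yr : Type u} {yL : yl → PGame.{u}}
    (yR : yr → PGame.{u}) {i : yl} (h : x ≤ yL i) : x ⧏ mk yl yr yL yR :=
  PLf.left x yl yr yL yR i h

theorem mk_lf_of_le {xl xr : Type u} {y : PGame.{u}} {xR : xr → PGame.{u}}
    (xL : xl → PGame.{u}) {j : xr} (h : xR j ≤ y) : mk xl xr xL xR ⧏ y :=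
  PLf.right xl xr xL xR y j h

theorem lf_of_le_moveLeft {x y : PGame.{u}} {i : y.LeftMoves} (h : x ≤ y.moveLeft i) :
    x ⧏ y := by
  cases y; exact PLf.left _ _ _ _ _ i h

theorem lf_of_lf_of_le {x y z : PGame.{u}} (h1 : x ⧏ y) (h2 : y ≤ z) : x ⧏ z :=
  lf_iff_not_le.2 fun h => lf_iff_not_le.1 h1 ((le_trans_aux y z x).1 h2 h)

theorem lt_of_le_of_lf {x y : PGame.{u}} (h1 : x ≤ y) (h2 : x ⧏ y) : x < y :=
  ⟨h1, lf_iff_not_le.1 h2⟩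

instance : Preorder PGame.{u} where
  le := fun x y => PLe x y
  lt := fun x y => PLe x y ∧ ¬ PLe y x
  le_refl := le_refl'
  le_trans := fun x y z => (le_trans_aux x y z).1
  lt_iff_le_not_ge := fun _ _ => Iff.rfl

end SetTheory.PGame

section Aux

open PoGame SetTheory PGame

private lemma np_atom (a : L5) : np (PoGame.atom a) = 0 := rfl

private lemma np_star : np PoGame.star =
    SetTheory.PGame.mk PUnit PUnit (fun _ => 0) (fun _ => 0) := rfl

private lemma np_Gseq_succ (n : ℕ) : np (Gseq (n + 1)) =
    SetTheory.PGame.mk PUnit PUnit (fun _ => 0) (fun _ => np (Pn n (Gseq n))) := rfl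

private lemma np_Pn_odd {n : ℕ} (h : Odd n) (G : PoGame L5) :
    np (Pn n G) = SetTheory.PGame.mk PUnit PUnit (fun _ => np G) (fun _ => 0) := by
  rw [Pn, if_pos h]; rfl

private lemma np_Pn_even {n : ℕ} (h : ¬ Odd n) (G : PoGame L5) :
    np (Pn n G) = SetTheory.PGame.mk PUnit PUnit (fun _ => np G)
      (fun _ => SetTheory.PGame.mk PUnit PUnit (fun _ => 0) (fun _ => 0)) := by
  rw [Pn, if_neg h]; rfl

/-- `0 ≤ np (Gseq n)` for all `n`. -/
private lemma zero_le_H : ∀ n, (0 : PGame) ≤ np (Gseq n) := by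
  intro n
  induction n with
  | zero => exact le_rfl
  | succ n ih =>
    rw [np_Gseq_succ]
    refine le_iff_forall_lf.2 ⟨fun i => i.elim, fun j => ?_⟩
    rcases Nat.even_or_odd n with he | ho
    · rw [moveRight_mk, np_Pn_even (Nat.not_odd_iff_even.mpr he) (Gseq n)]
      exact lf_mk_of_le _ (i := PUnit.unit) ih
    · rw [moveRight_mk, np_Pn_odd ho (Gseq n)]
      exact lf_mk_of_le _ (i := PUnit.unit) ih

/-- `np (Gseq n) ≤ np (Gseq (n+1))`. -/
private lemma H_le_H_succ : ∀ n, np (Gseq n) ≤ np (Gseq (n + 1)) := by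
  intro n
  have key : ∀ m, np (Gseq m) ⧏ np (Pn m (Gseq m)) := by
    intro m
    rcases Nat.even_or_odd m with he | ho
    · rw [np_Pn_even (Nat.not_odd_iff_even.mpr he)]
      exact lf_mk_of_le _ (i := PUnit.unit) le_rfl
    · rw [np_Pn_odd ho]
      exact lf_mk_of_le _ (i := PUnit.unit) le_rfl
  cases n with
  | zero =>
    show (0 : PGame) ≤ _
    exact zero_le_H 1
  | succ n =>
    rw [np_Gseq_succ n, np_Gseq_succ (n + 1)]
    refine le_iff_forall_lf.2 ⟨fun i => ?_, fun j => ?_⟩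
    · rw [moveLeft_mk]
      exact lf_of_le_moveLeft (i := PUnit.unit) le_rfl
    · rw [moveRight_mk, ← np_Gseq_succ n]
      exact key (n + 1)

/-- `t n ≤ np (Pn (n+1) (Gseq (n+1)))`: the right option of `K n` is ≤ `K (n+1)`. -/
private lemma t_le_K_succ (n : ℕ) :
    (if Odd n then (0 : PGame) else SetTheory.PGame.mk PUnit PUnit (fun _ => 0) (fun _ => 0))
      ≤ np (Pn (n + 1) (Gseq (n + 1))) := by
  rcases Nat.even_or_odd n with he | ho
  · -- n even, so t n = ⋆ and Pn (n+1) uses P: K (n+1) = {H(n+1) | 0}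
    rw [if_neg (Nat.not_odd_iff_even.mpr he), np_Pn_odd (Even.add_one he) (Gseq (n + 1))]
    refine le_iff_forall_lf.2 ⟨fun i => ?_, fun j => ?_⟩
    · -- left option 0 of ⋆ : 0 ⧏ K(n+1), via left option H(n+1) ≥ 0
      rw [moveLeft_mk]
      exact lf_mk_of_le _ (i := PUnit.unit) (zero_le_H (n + 1))
    · -- right option 0 of K(n+1) : ⋆ ⧏ 0, via right option 0 of ⋆
      rw [moveRight_mk]
      exact mk_lf_of_le _ (j := PUnit.unit) le_rfl
  · -- n odd, so t n = 0 and Pn (n+1) uses P⋆: K (n+1) = {H(n+1) | ⋆}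
    rw [if_pos ho, np_Pn_even (Nat.not_odd_iff_even.mpr (Odd.add_one ho)) (Gseq (n + 1))]
    refine le_iff_forall_lf.2 ⟨fun i => i.elim, fun j => ?_⟩
    · -- right option ⋆ of K(n+1) : 0 ⧏ ⋆, via left option 0 of ⋆
      rw [moveRight_mk]
      exact lf_mk_of_le _ (i := PUnit.unit) le_rfl

/-- `K n ⧏ K (n+1)`. -/
private lemma K_lf_K_succ (n : ℕ) :
    np (Pn n (Gseq n)) ⧏ np (Pn (n + 1) (Gseq (n + 1))) := by
  have h := t_le_K_succ n
  rcases Nat.even_or_odd n with he | ho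
  · rw [if_neg (Nat.not_odd_iff_even.mpr he)] at h
    rw [np_Pn_even (Nat.not_odd_iff_even.mpr he)]
    exact mk_lf_of_le _ (j := PUnit.unit) h
  · rw [if_pos ho] at h
    rw [np_Pn_odd ho]
    exact mk_lf_of_le _ (j := PUnit.unit) h

private lemma H_lf_H_succ : ∀ n, np (Gseq n) ⧏ np (Gseq (n + 1)) := by
  intro n
  induction n with
  | zero =>
    rw [np_Gseq_succ]
    exact lf_mk_of_le _ (i := PUnit.unit) le_rfl
  | succ n ih =>
    rw [np_Gseq_succ n]
    refine mk_lf_of_le _ (j := PUnit.unit) ?_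
    -- K n ≤ H (n+2)
    rw [np_Gseq_succ (n + 1)]
    have hKle : np (Pn n (Gseq n)) ≤
        SetTheory.PGame.mk PUnit PUnit (fun _ => 0)
          (fun _ => np (Pn (n + 1) (Gseq (n + 1)))) := by
      have h1 : np (Gseq n) ⧏ np (Gseq (n + 2)) :=
        lf_of_lf_of_le ih (H_le_H_succ (n + 1))
      rw [np_Gseq_succ (n + 1)] at h1
      have h2 := K_lf_K_succ n
      rcases Nat.even_or_odd n with he | ho
      · rw [np_Pn_even (Nat.not_odd_iff_even.mpr he)]
        rw [np_Pn_even (Nat.not_odd_iff_even.mpr he)] at h2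
        refine le_iff_forall_lf.2 ⟨fun i => ?_, fun j => ?_⟩
        · simpa using h1
        · simpa using h2
      · rw [np_Pn_odd ho]
        rw [np_Pn_odd ho] at h2
        refine le_iff_forall_lf.2 ⟨fun i => ?_, fun j => ?_⟩
        · simpa using h1
        · simpa using h2
    exact hKle

end Aux

open PoGame in
/-- The sequence `np (G_0), np (G_1), …` of normal-play games is strictly increasing. -/
theorem stmt_19 (n : ℕ) : np (Gseq n) < np (Gseq (n + 1)) := by
  exact SetTheory.PGame.lt_of_le_of_lf (H_le_H_succ n) (H_lf_H_succ n)
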